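/- Let E₂ be the set of operations on binary strings that increase the length by two, consisting of: inserting the adjacent pair 11 at some position, inserting the adjacent pair 00 at some position, and replacing an occurrence of 1 by 010. Then for any integers n ≥ 1, 0 ≤ a ≤ 2(n+1), 0 ≤ b ≤ 4, 0 ≤ c ≤ 2n, and any u, v ∈ C_{(a,b,c)}: if some binary word w ∈ {0,1}^{n+2} can be obtained from u by one operation from E₂ and also obtained from v by one operation from E₂, then u = v. -/

import Mathlib

namespace BinCode

/-- Hamming weight of a binary string. -/
def wt (u : List Bool) : ℕ := u.count true

/-- The VT syndrome `Σ_{i=1}^{|u|} i·u_i` (positions 1-indexed). -/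
def vtSum (u : List Bool) : ℕ := (u.zipIdx.map fun p => if p.1 then p.2 + 1 else 0).sum

/-- `Σ_{i=1}^{|u|} i · (u_1 + ⋯ + u_i)`. -/
def wSum (u : List Bool) : ℕ :=
  ((List.range u.length).map fun i => (i + 1) * wt (u.take (i + 1))).sum

/-- The (variable-length) Varshamov–Tenengolts code `C_VT(α, m)`. -/
def CVT (α m : ℕ) : Set (List Bool) := {z | z.length ≤ m - 1 ∧ vtSum z % m = α}

/-- The binary code `C_{(a,b,c)} ⊆ {0,1}^n`. -/
def Cabc (n a b c : ℕ) : Set (List Bool) :=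
  {u | u.length = n ∧ vtSum u % (2 * n + 3) = a ∧ wt u % 5 = b ∧
    wSum u % (2 * n + 1) = c}

/-- `w` is obtained from `u` by deleting one bit. -/
def delBit (u w : List Bool) : Prop := ∃ i, i < u.length ∧ w = u.eraseIdx i

/-- `w` is obtained from `u` by inserting the bit `b` at some position. -/
def insBitAt (u w : List Bool) (b : Bool) : Prop :=
  ∃ i, i ≤ u.length ∧ w = u.take i ++ b :: u.drop i

/-- `w` is obtained from `u` by inserting one bit. -/
def insBit (u w : List Bool) : Prop := ∃ b, insBitAt u w b

/-- Flip the bit at 0-based index `i`. -/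
def flipAt (u : List Bool) (i : ℕ) : List Bool := u.set i (!(u.getD i false))

/-- `w` is obtained from `u` by flipping one bit. -/
def flip1 (u w : List Bool) : Prop := ∃ i, i < u.length ∧ w = flipAt u i

/-- `w` is obtained from `u` by flipping two adjacent bits. -/
def flip2 (u w : List Bool) : Prop :=
  ∃ i, i + 1 < u.length ∧ w = flipAt (flipAt u i) (i + 1)

/-- `w` is obtained from `u` by replacing one bit by two adjacent bits via
`0 → 11` or `1 → 00`. -/
def expand1 (u w : List Bool) : Prop :=
  ∃ i, i < u.length ∧
    ((u.getD i false = false ∧ w = u.take i ++ true :: true :: u.drop (i + 1)) ∨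
     (u.getD i false = true ∧ w = u.take i ++ false :: false :: u.drop (i + 1)))

/-- `w` is obtained from `u` by inserting the adjacent pair `b b`. -/
def insPair (u w : List Bool) (b : Bool) : Prop :=
  ∃ i, i ≤ u.length ∧ w = u.take i ++ b :: b :: u.drop i

/-- `w` is obtained from `u` by replacing an occurrence of `1` by `010`. -/
def oneTo010 (u w : List Bool) : Prop :=
  ∃ i, i < u.length ∧ u.getD i false = true ∧
    w = u.take i ++ false :: true :: false :: u.drop (i + 1)


/-- The set `E₂` of operations increasing the length by two: inserting an
adjacent pair `11`, inserting an adjacent pair `00`, and `1 → 010`. -/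
def E2 (u w : List Bool) : Prop :=
  insPair u w true ∨ insPair u w false ∨ oneTo010 u w

/-! Auxiliary lemmas -/

lemma wt_cons (b : Bool) (t : List Bool) : wt (b :: t) = (if b then 1 else 0) + wt t := by
  simp [wt, List.count_cons]; cases b <;> simp [Nat.add_comm]

lemma wt_append (x y : List Bool) : wt (x ++ y) = wt x + wt y := by
  simp [wt, List.count_append]

def vtAux (k : ℕ) (u : List Bool) : ℕ :=
  ((u.zipIdx k).map fun p => if p.1 then p.2 + 1 else 0).sum

lemma vtSum_eq_vtAux (u : List Bool) : vtSum u = vtAux 0 u := by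
  simp [vtSum, vtAux]

lemma vtAux_cons (k : ℕ) (b : Bool) (t : List Bool) :
    vtAux k (b :: t) = (if b then k + 1 else 0) + vtAux (k+1) t := by
  simp [vtAux, List.zipIdx_cons]

lemma vtAux_shift (u : List Bool) : ∀ k, vtAux k u = vtAux 0 u + k * wt u := by
  induction u with
  | nil => intro k; simp [vtAux, wt]
  | cons b t ih =>
    intro k
    rw [vtAux_cons, vtAux_cons, ih (k+1), ih 1, wt_cons]
    cases b <;> simp <;> ring

lemma vtSum_cons (b : Bool) (t : List Bool) :
    vtSum (b :: t) = (if b then 1 else 0) + vtSum t + wt t := by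
  rw [vtSum_eq_vtAux, vtAux_cons, vtAux_shift t 1, vtSum_eq_vtAux]
  cases b <;> simp <;> ring

lemma vtSum_append (x y : List Bool) :
    vtSum (x ++ y) = vtSum x + vtSum y + x.length * wt y := by
  induction x with
  | nil => simp [vtSum]
  | cons b t ih =>
    simp only [List.cons_append, vtSum_cons, ih, wt_append, List.length_cons]
    cases b <;> simp <;> ring

lemma wt_drop_succ (w : List Bool) (k : ℕ) (hk : k < w.length) :
    wt (w.drop k) = (if w.getD k false then 1 else 0) + wt (w.drop (k+1)) := by
  rw [List.drop_eq_getElem_cons hk, wt_cons, List.getD_eq_getElem _ _ hk]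

lemma wt_drop_le (w : List Bool) {m m' : ℕ} (h : m ≤ m') :
    wt (w.drop m') ≤ wt (w.drop m) := by
  have : w.drop m' = (w.drop m).drop (m' - m) := by
    rw [List.drop_drop]; congr 1; omega
  rw [this]
  exact (List.drop_sublist _ _).count_le _

lemma wt_drop_sub_le (w : List Bool) {m m' : ℕ} (h : m ≤ m') :
    wt (w.drop m) ≤ (m' - m) + wt (w.drop m') := by
  induction m' , h using Nat.le_induction with
  | base => simp
  | succ k hk ih =>
    rcases Nat.lt_or_ge k w.length with hlt | hge
    · have := wt_drop_succ w k hlt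
      have : wt (w.drop k) ≤ 1 + wt (w.drop (k+1)) := by
        rw [this]; split <;> omega
      omega
    · have h1 : w.drop k = [] := List.drop_eq_nil_of_le hge
      have h2 : w.drop (k+1) = [] := List.drop_eq_nil_of_le (by omega)
      rw [h2, ← h1]; omega

lemma wt_drop_bound (w : List Bool) (m : ℕ) : wt (w.drop m) ≤ w.length - m := by
  have := List.count_le_length (a := true) (l := w.drop m)
  rwa [List.length_drop] at this

lemma all_false_window (w : List Bool) (m l : ℕ)
    (h : wt (w.drop m) = wt (w.drop (m + l))) :
    ∀ k, m ≤ k → k < m + l → k < w.length → w.getD k false = false := by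
  intro k hmk hkl hklen
  by_contra hne
  have hk : w.getD k false = true := by simpa using hne
  have h1 := wt_drop_succ w k hklen
  rw [hk] at h1; simp at h1
  have h2 : wt (w.drop k) ≤ wt (w.drop m) := wt_drop_le w hmk
  have h3 : wt (w.drop (m+l)) ≤ wt (w.drop (k+1)) := wt_drop_le w (by omega)
  omega

lemma all_true_window (w : List Bool) (m l : ℕ) (hlen : m + l ≤ w.length)
    (h : wt (w.drop m) = l + wt (w.drop (m + l))) :
    ∀ k, m ≤ k → k < m + l → w.getD k false = true := by
  intro k hmk hkl
  by_contra hne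
  have hk : w.getD k false = false := by simpa using hne
  have hklen : k < w.length := by omega
  have h1 := wt_drop_succ w k hklen
  rw [hk] at h1; simp at h1
  have h2 : wt (w.drop m) ≤ (k - m) + wt (w.drop k) := wt_drop_sub_le w hmk
  have h3 : wt (w.drop (k+1)) ≤ (m + l - (k+1)) + wt (w.drop (m+l)) :=
    wt_drop_sub_le w (by omega)
  omega

lemma run_step (w : List Bool) (b : Bool) (j : ℕ) (h3 : j + 3 ≤ w.length)
    (hb1 : w.getD j false = b) (hb2 : w.getD (j+2) false = b) :
    w.take j ++ w.drop (j+2) = w.take (j+1) ++ w.drop (j+3) := by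
  have hj : j < w.length := by omega
  have hj2 : j + 2 < w.length := by omega
  rw [List.drop_eq_getElem_cons hj2, List.take_succ]
  rw [List.getD_eq_getElem _ _ hj] at hb1
  rw [List.getD_eq_getElem _ _ hj2] at hb2
  have : w[j]? = some w[j] := List.getElem?_eq_getElem hj
  rw [this]
  simp [hb1, hb2]

lemma run_eq (w : List Bool) (b : Bool) {i j : ℕ} (hij : i ≤ j) (hj : j + 2 ≤ w.length)
    (hb : ∀ k, i ≤ k → k < j + 2 → w.getD k false = b) :
    w.take i ++ w.drop (i+2) = w.take j ++ w.drop (j+2) := by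
  induction j, hij using Nat.le_induction with
  | base => rfl
  | succ m hm ih =>
    rw [ih (by omega) (fun k hk hk2 => hb k hk (by omega))]
    exact run_step w b m (by omega) (hb m hm (by omega)) (hb (m+2) (by omega) (by omega))

lemma take_decomp (x q y : List Bool) (i : ℕ) (hx : x.length = i) :
    (x ++ q ++ y).take i = x := by
  subst hx; rw [List.append_assoc, List.take_left]

lemma drop_decomp (x q y : List Bool) (i : ℕ) (hx : x.length = i) :
    (x ++ q ++ y).drop (i + q.length) = y := by
  subst hx; rw [List.append_assoc, ← List.drop_drop, List.drop_left, List.drop_left]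

lemma getD_decomp (x q y : List Bool) (i : ℕ) (hx : x.length = i) (t : ℕ) (ht : t < q.length) :
    (x ++ q ++ y).getD (i + t) false = q.getD t false := by
  subst hx
  rw [List.getD_eq_getElem?_getD, List.getD_eq_getElem?_getD, List.append_assoc,
    List.getElem?_append_right (by omega), Nat.add_sub_cancel_left,
    List.getElem?_append_left ht]

lemma insPair_spec {u w : List Bool} {b : Bool} (h : insPair u w b) :
    ∃ i, i + 2 ≤ w.length ∧ u.length + 2 = w.length ∧
      u = w.take i ++ w.drop (i+2) ∧
      w.getD i false = b ∧ w.getD (i+1) false = b ∧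
      wt w = wt u + (if b then 2 else 0) ∧
      vtSum w = vtSum u + ((if b then 2*i+3 else 0) + 2 * wt (w.drop (i+2))) := by
  obtain ⟨i, hi, hw⟩ := h
  obtain ⟨x, y, hx, hu, hw'⟩ :
      ∃ x y : List Bool, x.length = i ∧ u = x ++ y ∧ w = x ++ [b, b] ++ y :=
    ⟨u.take i, u.drop i, by rw [List.length_take]; omega,
      (List.take_append_drop i u).symm, by simpa using hw⟩
  subst hu; subst hw'
  have hdp : (x ++ [b, b] ++ y).drop (i+2) = y := drop_decomp x [b,b] y i hx
  refine ⟨i, by simp; omega, by simp; omega, ?_, ?_, ?_, ?_, ?_⟩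
  · rw [hdp, take_decomp x [b,b] y i hx]
  · simpa using getD_decomp x [b,b] y i hx 0 (by simp)
  · simpa using getD_decomp x [b,b] y i hx 1 (by simp)
  · rw [wt_append, wt_append, wt_append]
    cases b <;> simp [wt_cons, wt] <;> omega
  · rw [hdp]
    cases b
    · have e1 : vtSum [false, false] = 0 := rfl
      have e2 : wt [false, false] = 0 := rfl
      simp [vtSum_append, wt_append, hx, e1, e2, vtSum_cons, wt_cons]; ring
    · have e1 : vtSum [true, true] = 3 := rfl
      have e2 : wt [true, true] = 2 := rfl
      simp [vtSum_append, wt_append, hx, e1, e2, vtSum_cons, wt_cons]; ring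

lemma oneTo010_spec {u w : List Bool} (h : oneTo010 u w) :
    ∃ i, i + 3 ≤ w.length ∧ u.length + 2 = w.length ∧
      u = w.take i ++ true :: w.drop (i+3) ∧
      w.getD i false = false ∧ w.getD (i+1) false = true ∧ w.getD (i+2) false = false ∧
      wt w = wt u ∧
      vtSum w = vtSum u + (1 + 2 * wt (w.drop (i+3))) := by
  obtain ⟨i, hi, hgu, hw⟩ := h
  obtain ⟨x, y, hx, hu, hw'⟩ :
      ∃ x y : List Bool, x.length = i ∧ u = x ++ true :: y ∧
        w = x ++ [false, true, false] ++ y := by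
    refine ⟨u.take i, u.drop (i+1), by rw [List.length_take]; omega, ?_, ?_⟩
    · conv_lhs => rw [← List.take_append_drop i u]
      rw [List.drop_eq_getElem_cons hi, ← List.getD_eq_getElem _ false hi, hgu]
    · rw [hw]; simp
  subst hu; subst hw'
  have hdp : (x ++ [false, true, false] ++ y).drop (i+3) = y :=
    drop_decomp x [false,true,false] y i hx
  refine ⟨i, by simp; omega, by simp; omega, ?_, ?_, ?_, ?_, ?_, ?_⟩
  · rw [hdp, take_decomp x [false,true,false] y i hx]
  · simpa using getD_decomp x [false,true,false] y i hx 0 (by simp)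
  · simpa using getD_decomp x [false,true,false] y i hx 1 (by simp)
  · simpa using getD_decomp x [false,true,false] y i hx 2 (by simp)
  · rw [wt_append, wt_append, wt_append, wt_cons]
    simp [wt_cons, wt]; omega
  · rw [hdp]
    have e1 : vtSum [false, true, false] = 2 := rfl
    have e2 : wt [false, true, false] = 1 := rfl
    have e3 : vtSum [true] = 1 := rfl
    have e4 : wt [true] = 1 := rfl
    have : vtSum (x ++ true :: y) = vtSum (x ++ [true] ++ y) := by simp
    rw [this]
    simp [vtSum_append, wt_append, hx, e1, e2, e3, e4, vtSum_cons, wt_cons]; ring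

lemma pair_true_aux (w : List Bool) {i j : ℕ} (hij : i ≤ j)
    (hj2 : j + 2 ≤ w.length)
    (hbi : w.getD i false = true) (hbi1 : w.getD (i+1) false = true)
    (hcount : i + wt (w.drop (i+2)) = j + wt (w.drop (j+2))) :
    w.take i ++ w.drop (i+2) = w.take j ++ w.drop (j+2) := by
  have hwin : ∀ k, i + 2 ≤ k → k < i + 2 + (j - i) → w.getD k false = true := by
    apply all_true_window w (i+2) (j-i) (by omega)
    rw [show i + 2 + (j - i) = j + 2 by omega]
    have := wt_drop_le w (show i + 2 ≤ j + 2 by omega)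
    omega
  apply run_eq w true hij hj2
  intro k hk hk2
  rcases Nat.lt_or_ge k (i+2) with h | h
  · have : k = i ∨ k = i + 1 := by omega
    rcases this with rfl | rfl
    · exact hbi
    · exact hbi1
  · exact hwin k h (by omega)

lemma pair_false_aux (w : List Bool) {i j : ℕ} (hij : i ≤ j)
    (hj2 : j + 2 ≤ w.length)
    (hbi : w.getD i false = false) (hbi1 : w.getD (i+1) false = false)
    (hbj : w.getD j false = false) (hbj1 : w.getD (j+1) false = false)
    (hcount : wt (w.drop (i+2)) = wt (w.drop (j+2))) :
    w.take i ++ w.drop (i+2) = w.take j ++ w.drop (j+2) := by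
  have hwin : ∀ k, i + 2 ≤ k → k < i + 2 + (j - i) → k < w.length → w.getD k false = false := by
    apply all_false_window w (i+2) (j-i)
    rw [show i + 2 + (j - i) = j + 2 by omega, hcount]
  apply run_eq w false hij hj2
  intro k hk hk2
  rcases Nat.lt_or_ge k (i+2) with h | h
  · have : k = i ∨ k = i + 1 := by omega
    rcases this with rfl | rfl
    · exact hbi
    · exact hbi1
  · exact hwin k h (by omega) (by omega)

lemma ten_ne (w : List Bool) {i j : ℕ} (hij : i < j) (hj3 : j + 3 ≤ w.length)
    (hbi1 : w.getD (i+1) false = true)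
    (hbj : w.getD j false = false) (hbj1 : w.getD (j+1) false = true)
    (hA : wt (w.drop (i+3)) = wt (w.drop (j+3))) : False := by
  have hwin : ∀ k, i + 3 ≤ k → k < i + 3 + (j - i) → k < w.length → w.getD k false = false := by
    apply all_false_window w (i+3) (j-i)
    rw [show i + 3 + (j - i) = j + 3 by omega, hA]
  rcases Nat.lt_or_ge j (i+2) with h | h
  · have : j = i + 1 := by omega
    subst this
    rw [hbi1] at hbj; exact absurd hbj (by simp)
  · have := hwin (j+1) (by omega) (by omega) (by omega)
    rw [hbj1] at this; exact absurd this (by simp)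

lemma delta_modeq {n : ℕ} {u v : List Bool}
    (h : vtSum u % (2*n+3) = vtSum v % (2*n+3))
    {W D1 D2 : ℕ} (h1 : W = vtSum u + D1) (h2 : W = vtSum v + D2)
    (hb1 : D1 < 2*n+3) (hb2 : D2 < 2*n+3) : D1 = D2 := by
  have key : vtSum u + D1 = vtSum v + D2 := by rw [← h1, ← h2]
  have hm : D1 ≡ D2 [MOD 2*n+3] :=
    Nat.ModEq.add_left_cancel (show vtSum u ≡ vtSum v [MOD 2*n+3] from h)
      (show vtSum u + D1 ≡ vtSum v + D2 [MOD 2*n+3] by rw [key])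
  calc D1 = D1 % (2*n+3) := (Nat.mod_eq_of_lt hb1).symm
    _ = D2 % (2*n+3) := hm
    _ = D2 := Nat.mod_eq_of_lt hb2

lemma delta_modeq' {n : ℕ} {u v : List Bool}
    (h : vtSum u % (2*n+3) = vtSum v % (2*n+3))
    {W s t : ℕ} (h1 : W = vtSum u + (2*s+3)) (h2 : W = vtSum v + (2*t+3))
    (hb1 : s ≤ n) (hb2 : t ≤ n) : s = t := by
  have key : vtSum u + (2*s+3) = vtSum v + (2*t+3) := by rw [← h1, ← h2]
  have hm : 2*s+3 ≡ 2*t+3 [MOD 2*n+3] :=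
    Nat.ModEq.add_left_cancel (show vtSum u ≡ vtSum v [MOD 2*n+3] from h)
      (show vtSum u + (2*s+3) ≡ vtSum v + (2*t+3) [MOD 2*n+3] by rw [key])
  have hm2 : 2*s ≡ 2*t [MOD 2*n+3] := Nat.ModEq.add_right_cancel' 3 hm
  have hcop : Nat.gcd (2*n+3) 2 = 1 :=
    Nat.Coprime.symm ((Nat.prime_two.coprime_iff_not_dvd).mpr (by omega))
  have hm3 : s ≡ t [MOD 2*n+3] := Nat.ModEq.cancel_left_of_coprime hcop hm2
  calc s = s % (2*n+3) := (Nat.mod_eq_of_lt (by omega)).symm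
    _ = t % (2*n+3) := hm3
    _ = t := Nat.mod_eq_of_lt (by omega)

/-- `C_{(a,b,c)}` corrects a single occurrence of an operation
from `E₂`. -/
theorem code_abc_corrects_plus_two
    (n a b c : ℕ) (hn : 1 ≤ n) (ha : a ≤ 2 * (n + 1)) (hb : b ≤ 4) (hc : c ≤ 2 * n)
    (u v : List Bool) (hu : u ∈ Cabc n a b c) (hv : v ∈ Cabc n a b c)
    (w : List Bool) (hwlen : w.length = n + 2)
    (hw1 : E2 u w) (hw2 : E2 v w) : u = v := by
  obtain ⟨hul, huVT, huW5, -⟩ := hu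
  obtain ⟨hvl, hvVT, hvW5, -⟩ := hv
  have hVT : vtSum u % (2*n+3) = vtSum v % (2*n+3) := by rw [huVT, hvVT]
  have hW5 : wt u % 5 = wt v % 5 := by rw [huW5, hvW5]
  rcases hw1 with h1 | h1 | h1
  · obtain ⟨i, hi2, hlen1, hueq, hgi, hgi1, hwt1, hvt1⟩ := insPair_spec h1
    simp only [if_true] at hwt1 hvt1
    rcases hw2 with h2 | h2 | h2
    · -- true/true
      obtain ⟨j, hj2, hlen2, hveq, hgj, hgj1, hwt2, hvt2⟩ := insPair_spec h2
      simp only [if_true] at hwt2 hvt2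
      have hA : wt (w.drop (i+2)) ≤ w.length - (i+2) := wt_drop_bound w (i+2)
      have hB : wt (w.drop (j+2)) ≤ w.length - (j+2) := wt_drop_bound w (j+2)
      have h1' : vtSum w = vtSum u + (2*(i + wt (w.drop (i+2))) + 3) := by
        rw [hvt1]; ring
      have h2' : vtSum w = vtSum v + (2*(j + wt (w.drop (j+2))) + 3) := by
        rw [hvt2]; ring
      have hst : i + wt (w.drop (i+2)) = j + wt (w.drop (j+2)) :=
        delta_modeq' hVT h1' h2' (by omega) (by omega)
      rcases le_total i j with hij | hij
      · rw [hueq, hveq]; exact pair_true_aux w hij hj2 hgi hgi1 hst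
      · rw [hueq, hveq]; exact (pair_true_aux w hij hi2 hgj hgj1 hst.symm).symm
    · -- true/false : weight contradiction
      obtain ⟨j, hj2, hlen2, hveq, hgj, hgj1, hwt2, hvt2⟩ := insPair_spec h2
      simp only [if_false, Bool.false_eq_true] at hwt2
      exfalso; omega
    · obtain ⟨j, hj3, hlen2, hveq, hgj, hgj1, hgj2, hwt2, hvt2⟩ := oneTo010_spec h2
      exfalso; omega
  · obtain ⟨i, hi2, hlen1, hueq, hgi, hgi1, hwt1, hvt1⟩ := insPair_spec h1
    simp only [if_false, Bool.false_eq_true] at hwt1 hvt1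
    have hA : wt (w.drop (i+2)) ≤ w.length - (i+2) := wt_drop_bound w (i+2)
    rcases hw2 with h2 | h2 | h2
    · -- false/true : weight contradiction
      obtain ⟨j, hj2, hlen2, hveq, hgj, hgj1, hwt2, hvt2⟩ := insPair_spec h2
      simp only [if_true] at hwt2
      exfalso; omega
    · -- false/false
      obtain ⟨j, hj2, hlen2, hveq, hgj, hgj1, hwt2, hvt2⟩ := insPair_spec h2
      simp only [if_false, Bool.false_eq_true] at hwt2 hvt2
      have hB : wt (w.drop (j+2)) ≤ w.length - (j+2) := wt_drop_bound w (j+2)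
      have hAB : 2 * wt (w.drop (i+2)) = 2 * wt (w.drop (j+2)) :=
        delta_modeq (W := vtSum w) hVT (by omega) (by omega)
          (by omega) (by omega)
      have hAB' : wt (w.drop (i+2)) = wt (w.drop (j+2)) := by omega
      rcases le_total i j with hij | hij
      · rw [hueq, hveq]; exact pair_false_aux w hij hj2 hgi hgi1 hgj hgj1 hAB'
      · rw [hueq, hveq]
        exact (pair_false_aux w hij hi2 hgj hgj1 hgi hgi1 hAB'.symm).symm
    · -- false/010 : parity contradiction
      obtain ⟨j, hj3, hlen2, hveq, hgj, hgj1, hgj2, hwt2, hvt2⟩ := oneTo010_spec h2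
      have hB : wt (w.drop (j+3)) ≤ w.length - (j+3) := wt_drop_bound w (j+3)
      have hAB : 2 * wt (w.drop (i+2)) = 1 + 2 * wt (w.drop (j+3)) :=
        delta_modeq (W := vtSum w) hVT (by omega) (by omega)
          (by omega) (by omega)
      exfalso; omega
  · obtain ⟨i, hi3, hlen1, hueq, hgi, hgi1, hgi2, hwt1, hvt1⟩ := oneTo010_spec h1
    have hA : wt (w.drop (i+3)) ≤ w.length - (i+3) := wt_drop_bound w (i+3)
    rcases hw2 with h2 | h2 | h2
    · -- 010/true : weight contradiction
      obtain ⟨j, hj2, hlen2, hveq, hgj, hgj1, hwt2, hvt2⟩ := insPair_spec h2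
      simp only [if_true] at hwt2
      exfalso; omega
    · -- 010/false : parity contradiction
      obtain ⟨j, hj2, hlen2, hveq, hgj, hgj1, hwt2, hvt2⟩ := insPair_spec h2
      simp only [if_false, Bool.false_eq_true] at hvt2
      have hB : wt (w.drop (j+2)) ≤ w.length - (j+2) := wt_drop_bound w (j+2)
      have hAB : 1 + 2 * wt (w.drop (i+3)) = 2 * wt (w.drop (j+2)) :=
        delta_modeq (W := vtSum w) hVT (by omega) (by omega)
          (by omega) (by omega)
      exfalso; omega
    · -- 010/010
      obtain ⟨j, hj3, hlen2, hveq, hgj, hgj1, hgj2, hwt2, hvt2⟩ := oneTo010_spec h2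
      have hB : wt (w.drop (j+3)) ≤ w.length - (j+3) := wt_drop_bound w (j+3)
      have hAB : 1 + 2 * wt (w.drop (i+3)) = 1 + 2 * wt (w.drop (j+3)) :=
        delta_modeq (W := vtSum w) hVT (by omega) (by omega)
          (by omega) (by omega)
      have hAB' : wt (w.drop (i+3)) = wt (w.drop (j+3)) := by omega
      rcases Nat.lt_trichotomy i j with hij | hij | hij
      · exact absurd (ten_ne w hij hj3 hgi1 hgj hgj1 hAB') (not_false_iff.mpr trivial)
      · subst hij; rw [hueq, hveq]
      · exact absurd (ten_ne w hij hi3 hgj1 hgi hgi1 hAB'.symm) (not_false_iff.mpr trivial)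

end BinCode
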